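/- Let (V,*) be a magmatic algebra with * extended to T(V), and let Lie(V) ⊆ T(V) denote the free Lie algebra on V (the primitive elements of (T(V),·,Δ_⧢)). Then Lie(V)*T(V) ⊆ Lie(V), and (Lie(V), [−,−], *) is a post-Lie algebra, where [f,g] = fg − gf. -/

import Mathlib

open scoped TensorProduct

noncomputable section

variable (K V : Type*) [Field K] [AddCommGroup V] [Module K V]

/-- The deshuffling coproduct on the tensor algebra: the unique algebra morphism
sending `x : V` to `x ⊗ 1 + 1 ⊗ x`. -/
def deshuffle : TensorAlgebra K V →ₐ[K]
    TensorAlgebra K V ⊗[K] TensorAlgebra K V :=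
  TensorAlgebra.lift K
    (((TensorProduct.mk K (TensorAlgebra K V) (TensorAlgebra K V)).flip 1) ∘ₗ TensorAlgebra.ι K
      + (TensorProduct.mk K (TensorAlgebra K V) (TensorAlgebra K V) 1) ∘ₗ TensorAlgebra.ι K)

/-- The counit of the tensor algebra: the algebra morphism killing `V`. -/
def tensorCounit : TensorAlgebra K V →ₐ[K] K :=
  TensorAlgebra.lift K (0 : V →ₗ[K] K)

variable {K V}

/-- `star` is the canonical extension to `T(V)` of the magmatic product `m` on `V`:
(i) `f*1 = f`; (ii) `1*f = ε(f)1`; (iii) `x*(fy) = (x*f)*y − x*(f*y)`;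
(iv) `(fg)*h = Σ (f*h⁽¹⁾)(g*h⁽²⁾)`, and `star` restricted to `V` is `m`. -/
def IsMagExt (m : V →ₗ[K] V →ₗ[K] V)
    (star : TensorAlgebra K V →ₗ[K] TensorAlgebra K V →ₗ[K] TensorAlgebra K V) : Prop :=
  (∀ x y : V, star (TensorAlgebra.ι K x) (TensorAlgebra.ι K y) = TensorAlgebra.ι K (m x y)) ∧
  (∀ f, star f 1 = f) ∧
  (∀ f, star 1 f = (tensorCounit K V f) • 1) ∧
  (∀ (x : V) (f : TensorAlgebra K V) (y : V),
    star (TensorAlgebra.ι K x) (f * TensorAlgebra.ι K y)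
      = star (star (TensorAlgebra.ι K x) f) (TensorAlgebra.ι K y)
        - star (TensorAlgebra.ι K x) (star f (TensorAlgebra.ι K y))) ∧
  (∀ f g h, star (f * g) h
      = LinearMap.mul' K (TensorAlgebra K V)
          (TensorProduct.map (star f) (star g) (deshuffle K V h)))

attribute [local instance 100] LieRing.ofAssociativeRing

namespace PLaux

lemma deshuffle_ι (x : V) :
    deshuffle K V (TensorAlgebra.ι K x)
      = TensorAlgebra.ι K x ⊗ₜ[K] 1 + 1 ⊗ₜ[K] TensorAlgebra.ι K x := by
  simp [deshuffle, TensorAlgebra.lift_ι_apply, TensorProduct.mk]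

lemma counit_ι (x : V) : tensorCounit K V (TensorAlgebra.ι K x) = 0 := by
  simp [tensorCounit, TensorAlgebra.lift_ι_apply]

variable (K)

def mono (l : List V) : TensorAlgebra K V := (l.map (TensorAlgebra.ι K)).prod

lemma mono_nil : mono K ([] : List V) = 1 := rfl

lemma mono_concat (l : List V) (y : V) :
    mono K (l ++ [y]) = mono K l * TensorAlgebra.ι K y := by
  simp [mono]

lemma mono_append (l l' : List V) : mono K (l ++ l') = mono K l * mono K l' := by
  simp [mono]

def F (n : ℕ) : Submodule K (TensorAlgebra K V) :=
  Submodule.span K {x | ∃ l : List V, l.length ≤ n ∧ x = mono K l}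

variable {K}

lemma mono_mem_F {l : List V} {n : ℕ} (h : l.length ≤ n) : mono K l ∈ F K n :=
  Submodule.subset_span ⟨l, h, rfl⟩

lemma F_mono {n m : ℕ} (h : n ≤ m) : (F K n : Submodule K (TensorAlgebra K V)) ≤ F K m :=
  Submodule.span_mono (fun _ ⟨l, hl, hx⟩ => ⟨l, hl.trans h, hx⟩)

lemma one_mem_F (n : ℕ) : (1 : TensorAlgebra K V) ∈ F K n := by
  have := mono_mem_F (K := K) (l := ([] : List V)) (n := n) (by simp)
  simpa [mono_nil] using this

lemma F_mul {n m : ℕ} {f g : TensorAlgebra K V} (hf : f ∈ F K n) (hg : g ∈ F K m) :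
    f * g ∈ F K (n + m) := by
  induction hf using Submodule.span_induction with
  | mem x hx =>
    obtain ⟨l, hl, rfl⟩ := hx
    induction hg using Submodule.span_induction with
    | mem y hy =>
      obtain ⟨l', hl', rfl⟩ := hy
      rw [← mono_append]
      exact mono_mem_F (by simp [Nat.add_le_add hl hl'])
    | zero => simp [Submodule.zero_mem]
    | add a b _ _ ha hb => rw [mul_add]; exact Submodule.add_mem _ ha hb
    | smul c a _ ha => rw [mul_smul_comm]; exact Submodule.smul_mem _ _ ha
  | zero => simp [Submodule.zero_mem]
  | add a b _ _ ha hb => rw [add_mul]; exact Submodule.add_mem _ ha hb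
  | smul c a _ ha => rw [smul_mul_assoc]; exact Submodule.smul_mem _ _ ha

lemma exists_F (f : TensorAlgebra K V) : ∃ n, f ∈ F K n := by
  induction f using TensorAlgebra.induction with
  | algebraMap r =>
    exact ⟨0, by rw [Algebra.algebraMap_eq_smul_one]; exact Submodule.smul_mem _ _ (one_mem_F 0)⟩
  | ι x => exact ⟨1, by simpa [mono] using mono_mem_F (l := [x]) (le_refl 1)⟩
  | mul a b ha hb =>
    obtain ⟨n, hn⟩ := ha; obtain ⟨m, hm⟩ := hb
    exact ⟨n + m, F_mul hn hm⟩
  | add a b ha hb =>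
    obtain ⟨n, hn⟩ := ha; obtain ⟨m, hm⟩ := hb
    exact ⟨max n m, Submodule.add_mem _ (F_mono (le_max_left n m) hn)
      (F_mono (le_max_right n m) hm)⟩

/-- induction over monomials for submodule-like predicates -/
lemma mono_ind {P : TensorAlgebra K V → Prop} (h0 : P 0)
    (hadd : ∀ a b, P a → P b → P (a + b)) (hsmul : ∀ (c : K) a, P a → P (c • a))
    (hm : ∀ l : List V, P (mono K l)) (f : TensorAlgebra K V) : P f := by
  obtain ⟨n, hn⟩ := exists_F f
  induction hn using Submodule.span_induction with
  | mem x hx => obtain ⟨l, _, rfl⟩ := hx; exact hm l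
  | zero => exact h0
  | add a b _ _ ha hb => exact hadd _ _ ha hb
  | smul c a _ ha => exact hsmul _ _ ha

section S
variable {m : V →ₗ[K] V →ₗ[K] V}
  {star : TensorAlgebra K V →ₗ[K] TensorAlgebra K V →ₗ[K] TensorAlgebra K V}
  (hs : IsMagExt m star)

include hs

lemma star_prim_prod {h : TensorAlgebra K V}
    (hΔ : deshuffle K V h = h ⊗ₜ[K] 1 + 1 ⊗ₜ[K] h) (f g : TensorAlgebra K V) :
    star (f * g) h = star f h * g + f * star g h := by
  rw [hs.2.2.2.2, hΔ, map_add, TensorProduct.map_tmul, TensorProduct.map_tmul, map_add,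
    LinearMap.mul'_apply, LinearMap.mul'_apply, hs.2.1, hs.2.1]

lemma star_mul_ι_ι (f : TensorAlgebra K V) (z y : V) :
    star (f * TensorAlgebra.ι K z) (TensorAlgebra.ι K y)
      = star f (TensorAlgebra.ι K y) * TensorAlgebra.ι K z + f * TensorAlgebra.ι K (m z y) := by
  rw [hs.2.2.2.2, deshuffle_ι, map_add, TensorProduct.map_tmul, TensorProduct.map_tmul, map_add,
    LinearMap.mul'_apply, LinearMap.mul'_apply, hs.2.1, hs.2.1, hs.1]

lemma star_one_ι (y : V) : star 1 (TensorAlgebra.ι K y) = 0 := by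
  rw [hs.2.2.1, counit_ι, zero_smul]

lemma counit_star_ι (f : TensorAlgebra K V) (y : V) :
    tensorCounit K V (star f (TensorAlgebra.ι K y)) = 0 := by
  induction f using mono_ind with
  | h0 => simp
  | hadd a b ha hb => rw [map_add, LinearMap.add_apply, map_add, ha, hb, add_zero]
  | hsmul c a ha => rw [map_smul, LinearMap.smul_apply, map_smul, ha, smul_zero]
  | hm l =>
    induction l using List.reverseRecOn with
    | nil => rw [mono_nil, star_one_ι hs, map_zero]
    | append_singleton l z ih =>
      rw [mono_concat, star_mul_ι_ι hs]
      simp [ih, counit_ι]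

lemma F_star_ι {n : ℕ} {f : TensorAlgebra K V} (hf : f ∈ F K n) (y : V) :
    star f (TensorAlgebra.ι K y) ∈ F K n := by
  have key : ∀ l : List V, ∀ y : V, star (mono K l) (TensorAlgebra.ι K y) ∈ F K l.length := by
    intro l
    induction l using List.reverseRecOn with
    | nil => intro y; rw [mono_nil, star_one_ι hs]; exact Submodule.zero_mem _
    | append_singleton l z ih =>
      intro y
      rw [mono_concat, star_mul_ι_ι hs]
      refine Submodule.add_mem _ ?_ ?_
      · have h1 : TensorAlgebra.ι K z ∈ F K 1 := by
          simpa [mono] using mono_mem_F (K := K) (l := [z]) (le_refl 1)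
        simpa using F_mul (ih y) h1
      · have : mono K l * TensorAlgebra.ι K (m z y) = mono K (l ++ [m z y]) :=
          (mono_concat K l _).symm
        rw [this]
        exact mono_mem_F (by simp)
  induction hf using Submodule.span_induction with
  | mem x hx =>
    obtain ⟨l, hl, rfl⟩ := hx
    exact F_mono hl (key l y)
  | zero => rw [map_zero, LinearMap.zero_apply]; exact Submodule.zero_mem _
  | add a b _ _ ha hb => rw [map_add, LinearMap.add_apply]; exact Submodule.add_mem _ ha hb
  | smul c a _ ha => rw [map_smul, LinearMap.smul_apply]; exact Submodule.smul_mem _ _ ha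

end S

/-- the per-tensor "coderivation" operator -/
def Phi (st : TensorAlgebra K V →ₗ[K] TensorAlgebra K V →ₗ[K] TensorAlgebra K V) (y : V) :
    (TensorAlgebra K V ⊗[K] TensorAlgebra K V) →ₗ[K] (TensorAlgebra K V ⊗[K] TensorAlgebra K V) :=
  TensorProduct.map (st.flip (TensorAlgebra.ι K y)) LinearMap.id
    + TensorProduct.map LinearMap.id (st.flip (TensorAlgebra.ι K y))

section S2
variable {m : V →ₗ[K] V →ₗ[K] V}
  {star : TensorAlgebra K V →ₗ[K] TensorAlgebra K V →ₗ[K] TensorAlgebra K V}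
  (hs : IsMagExt m star)

local notation "T" => TensorAlgebra K V
local notation "ιι" => TensorAlgebra.ι K
local notation "Δ" => deshuffle K V
local notation "μ" => LinearMap.mul' K (TensorAlgebra K V)

include hs

lemma coderiv (f : T) (y : V) :
    Δ (star f (ιι y)) = Phi star y (Δ f) := by
  induction f using mono_ind with
  | h0 => simp
  | hadd a b ha hb => simp [ha, hb]
  | hsmul c a ha => simp [ha]
  | hm l =>
    induction l using List.reverseRecOn with
    | nil =>
      rw [mono_nil, star_one_ι hs, map_zero, map_one]
      simp [Phi, Algebra.TensorProduct.one_def, star_one_ι hs]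
    | append_singleton l z ih =>
      have key : ∀ t : T ⊗[K] T,
          Phi star y (t * (ιι z ⊗ₜ[K] 1 + 1 ⊗ₜ[K] ιι z))
            = (Phi star y t) * (ιι z ⊗ₜ[K] 1 + 1 ⊗ₜ[K] ιι z)
            + t * (ιι (m z y) ⊗ₜ[K] 1 + 1 ⊗ₜ[K] ιι (m z y)) := by
        intro t
        induction t using TensorProduct.induction_on with
        | zero => simp
        | tmul a b =>
          simp only [Phi, LinearMap.add_apply, TensorProduct.map_tmul,
            LinearMap.id_apply, LinearMap.flip_apply, mul_add, add_mul,
            Algebra.TensorProduct.tmul_mul_tmul, one_mul, mul_one, map_add]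
          rw [star_mul_ι_ι hs a z y, star_mul_ι_ι hs b z y]
          simp only [TensorProduct.add_tmul, TensorProduct.tmul_add]
          abel
        | add t t' h1 h2 =>
          simp only [add_mul, map_add, h1, h2]
          abel
      rw [mono_concat, star_mul_ι_ι hs, map_add, map_mul, map_mul, map_mul, ih,
        deshuffle_ι z, deshuffle_ι ((m z) y), key (Δ (mono K l))]

lemma star_prod_ι (f : T) : ∀ (h : T) (y : V),
    star f (h * ιι y) = star (star f h) (ιι y) - star f (star h (ιι y)) := by
  have one_case : ∀ (h : T) (y : V),
      star (1 : T) (h * ιι y) = star (star (1 : T) h) (ιι y) - star (1 : T) (star h (ιι y)) := by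
    intro h y
    have e1 : star (1 : T) (h * ιι y) = 0 := by
      rw [hs.2.2.1, map_mul, counit_ι, mul_zero, zero_smul]
    have e2 : star (star (1 : T) h) (ιι y) = 0 := by
      rw [hs.2.2.1, map_smul, LinearMap.smul_apply, star_one_ι hs, smul_zero]
    have e3 : star (1 : T) (star h (ιι y)) = 0 := by
      rw [hs.2.2.1, counit_star_ι hs, zero_smul]
    rw [e1, e2, e3, sub_zero]
  have mul_case : ∀ u v : T,
      (∀ (h : T) (y : V), star u (h * ιι y) = star (star u h) (ιι y) - star u (star h (ιι y))) →
      (∀ (h : T) (y : V), star v (h * ιι y) = star (star v h) (ιι y) - star v (star h (ιι y))) →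
      ∀ (h : T) (y : V), star (u * v) (h * ιι y)
        = star (star (u * v) h) (ιι y) - star (u * v) (star h (ιι y)) := by
    intro u v hu hv h y
    have key : ∀ t : T ⊗[K] T,
        μ (TensorProduct.map (star u) (star v) (t * (ιι y ⊗ₜ[K] 1 + 1 ⊗ₜ[K] ιι y)))
          = star (μ (TensorProduct.map (star u) (star v) t)) (ιι y)
            - μ (TensorProduct.map (star u) (star v) (Phi star y t)) := by
      intro t
      induction t using TensorProduct.induction_on with
      | zero => simp
      | tmul a b =>
        simp only [Phi, LinearMap.add_apply, TensorProduct.map_tmul,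
          LinearMap.id_apply, LinearMap.flip_apply, mul_add,
          Algebra.TensorProduct.tmul_mul_tmul, one_mul, mul_one, map_add,
          LinearMap.mul'_apply]
        rw [hu a y, hv b y, star_prim_prod hs (deshuffle_ι y) (star u a) (star v b)]
        simp only [sub_mul, mul_sub]
        abel
      | add t t' h1 h2 =>
        simp only [add_mul, map_add, LinearMap.add_apply, h1, h2]
        abel
    calc star (u * v) (h * ιι y)
        = μ (TensorProduct.map (star u) (star v) (Δ h * (ιι y ⊗ₜ[K] 1 + 1 ⊗ₜ[K] ιι y))) := by
          rw [hs.2.2.2.2, map_mul, deshuffle_ι]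
      _ = star (μ (TensorProduct.map (star u) (star v) (Δ h))) (ιι y)
            - μ (TensorProduct.map (star u) (star v) (Phi star y (Δ h))) := key (Δ h)
      _ = star (star (u * v) h) (ιι y) - star (u * v) (star h (ιι y)) := by
          rw [← hs.2.2.2.2, ← coderiv hs, ← hs.2.2.2.2]
  induction f using mono_ind with
  | h0 => intro h y; simp
  | hadd a b ha hb =>
    intro h y
    simp only [map_add, LinearMap.add_apply, ha h y, hb h y]
    abel
  | hsmul c a ha =>
    intro h y
    simp only [map_smul, LinearMap.smul_apply, ha h y, smul_sub]
  | hm l =>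
    induction l using List.reverseRecOn with
    | nil => rw [mono_nil]; exact one_case
    | append_singleton l z ih =>
      rw [mono_concat]
      exact mul_case _ _ ih (fun h y => hs.2.2.2.1 z h y)

end S2
section Lie

local notation "T" => TensorAlgebra K V
local notation "ιι" => TensorAlgebra.ι K
local notation "Δ" => deshuffle K V
local notation "Ls" => LieSubalgebra.lieSpan K (TensorAlgebra K V)
  (Set.range (TensorAlgebra.ι K : V →ₗ[K] TensorAlgebra K V))

/-- primitive elements -/
def primSub : LieSubalgebra K (TensorAlgebra K V) where
  carrier := {f : T | Δ f = f ⊗ₜ[K] 1 + 1 ⊗ₜ[K] f}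
  add_mem' := by
    intro a b ha hb
    simp only [Set.mem_setOf_eq] at *
    rw [map_add, ha, hb, TensorProduct.add_tmul, TensorProduct.tmul_add]
    abel
  zero_mem' := by simp
  smul_mem' := by
    intro c a ha
    simp only [Set.mem_setOf_eq] at *
    rw [map_smul, ha, smul_add, TensorProduct.smul_tmul', TensorProduct.tmul_smul]
  lie_mem' := by
    intro a b ha hb
    simp only [Set.mem_setOf_eq] at *
    rw [Ring.lie_def, map_sub, map_mul, map_mul, ha, hb]
    simp only [mul_add, add_mul, Algebra.TensorProduct.tmul_mul_tmul, one_mul, mul_one,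
      Ring.lie_def, TensorProduct.sub_tmul, TensorProduct.tmul_sub]
    abel

lemma prim {f : T} (hf : f ∈ Ls) : Δ f = f ⊗ₜ[K] 1 + 1 ⊗ₜ[K] f := by
  have hle : Ls ≤ primSub := by
    rw [LieSubalgebra.lieSpan_le]
    rintro _ ⟨x, rfl⟩
    show Δ (ιι x) = _
    rw [deshuffle_ι]
  exact hle hf

lemma cocomm (g : T) : (Algebra.TensorProduct.comm K (TensorAlgebra K V) (TensorAlgebra K V))
    (Δ g) = Δ g := by
  have : ((Algebra.TensorProduct.comm K (TensorAlgebra K V)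
      (TensorAlgebra K V)).toAlgHom.comp (deshuffle K V)) = deshuffle K V := by
    apply TensorAlgebra.hom_ext
    apply LinearMap.ext
    intro x
    simp [deshuffle_ι, add_comm]
  calc (Algebra.TensorProduct.comm K (TensorAlgebra K V) (TensorAlgebra K V)) (Δ g)
      = ((Algebra.TensorProduct.comm K (TensorAlgebra K V)
          (TensorAlgebra K V)).toAlgHom.comp (deshuffle K V)) g := rfl
    _ = Δ g := by rw [this]

end Lie

inductive LieMon (K V : Type*) [Field K] [AddCommGroup V] [Module K V] :
    ℕ → TensorAlgebra K V → Prop where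
  | base (x : V) : LieMon K V 1 (TensorAlgebra.ι K x)
  | brk {a b : ℕ} {p q : TensorAlgebra K V} :
      LieMon K V a p → LieMon K V b q → LieMon K V (a + b) ⁅p, q⁆

section Lie2

local notation "T" => TensorAlgebra K V
local notation "ιι" => TensorAlgebra.ι K
local notation "Ls" => LieSubalgebra.lieSpan K (TensorAlgebra K V)
  (Set.range (TensorAlgebra.ι K : V →ₗ[K] TensorAlgebra K V))

lemma LieMon.pos {k : ℕ} {p : T} (h : LieMon K V k p) : 1 ≤ k := by
  induction h with
  | base x => exact le_refl 1
  | brk hp hq ihp ihq => omega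

lemma LieMon.mem_lieSpan {k : ℕ} {p : T} (h : LieMon K V k p) : p ∈ Ls := by
  induction h with
  | base x => exact LieSubalgebra.subset_lieSpan ⟨x, rfl⟩
  | brk hp hq ihp ihq => exact LieSubalgebra.lie_mem _ ihp ihq

variable (K)

def LF (n : ℕ) : Submodule K (TensorAlgebra K V) :=
  Submodule.span K {p | ∃ k, k ≤ n ∧ LieMon K V k p}

variable {K}

lemma LF_mono {n m : ℕ} (h : n ≤ m) : (LF K n : Submodule K (TensorAlgebra K V)) ≤ LF K m :=
  Submodule.span_mono (fun _ ⟨k, hk, hp⟩ => ⟨k, hk.trans h, hp⟩)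

lemma LieMon.mem_LF {k n : ℕ} {p : T} (h : LieMon K V k p) (hk : k ≤ n) : p ∈ LF K n :=
  Submodule.subset_span ⟨k, hk, h⟩

lemma LF_le {n : ℕ} : (LF K n : Submodule K (TensorAlgebra K V))
    ≤ (LieSubalgebra.lieSpan K (TensorAlgebra K V)
      (Set.range (TensorAlgebra.ι K : V →ₗ[K] TensorAlgebra K V))).toSubmodule := by
  rw [LF, Submodule.span_le]
  rintro p ⟨k, _, hp⟩
  exact hp.mem_lieSpan

lemma LF_brk {a b : ℕ} {p q : T} (hp : p ∈ LF K a) (hq : q ∈ LF K b) :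
    ⁅p, q⁆ ∈ LF K (a + b) := by
  induction hp using Submodule.span_induction with
  | mem u hu =>
    obtain ⟨j, hj, hu⟩ := hu
    induction hq using Submodule.span_induction with
    | mem v hv =>
      obtain ⟨k, hk, hv⟩ := hv
      exact (hu.brk hv).mem_LF (by omega)
    | zero => rw [lie_zero]; exact Submodule.zero_mem _
    | add v w _ _ hv hw => rw [lie_add]; exact Submodule.add_mem _ hv hw
    | smul c v _ hv => rw [lie_smul]; exact Submodule.smul_mem _ _ hv
  | zero => rw [zero_lie]; exact Submodule.zero_mem _
  | add u w _ _ hu hw => rw [add_lie]; exact Submodule.add_mem _ hu hw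
  | smul c u _ hu => rw [smul_lie]; exact Submodule.smul_mem _ _ hu

def ULF : LieSubalgebra K (TensorAlgebra K V) where
  carrier := {p : T | ∃ n, p ∈ LF K n}
  add_mem' := by
    rintro a b ⟨n, ha⟩ ⟨m, hb⟩
    exact ⟨max n m, Submodule.add_mem _ (LF_mono (le_max_left n m) ha)
      (LF_mono (le_max_right n m) hb)⟩
  zero_mem' := ⟨0, Submodule.zero_mem _⟩
  smul_mem' := by rintro c a ⟨n, ha⟩; exact ⟨n, Submodule.smul_mem _ _ ha⟩
  lie_mem' := by rintro a b ⟨n, ha⟩ ⟨k, hb⟩; exact ⟨n + k, LF_brk ha hb⟩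

lemma exists_LF {p : T} (hp : p ∈ Ls) : ∃ n, p ∈ LF K n := by
  have hle : Ls ≤ ULF := by
    rw [LieSubalgebra.lieSpan_le]
    rintro _ ⟨x, rfl⟩
    exact ⟨1, (LieMon.base x).mem_LF (le_refl 1)⟩
  exact hle hp

end Lie2
section S3
variable {m : V →ₗ[K] V →ₗ[K] V}
  {star : TensorAlgebra K V →ₗ[K] TensorAlgebra K V →ₗ[K] TensorAlgebra K V}
  (hs : IsMagExt m star)

local notation "T" => TensorAlgebra K V
local notation "ιι" => TensorAlgebra.ι K
local notation "Δ" => deshuffle K V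
local notation "μ" => LinearMap.mul' K (TensorAlgebra K V)
local notation "τ" => Algebra.TensorProduct.comm K (TensorAlgebra K V) (TensorAlgebra K V)
local notation "Ls" => LieSubalgebra.lieSpan K (TensorAlgebra K V)
  (Set.range (TensorAlgebra.ι K : V →ₗ[K] TensorAlgebra K V))

include hs

lemma V_star_F (n : ℕ) : ∀ g ∈ F K n, ∀ x : V,
    star (ιι x) g ∈ LinearMap.range (TensorAlgebra.ι K : V →ₗ[K] TensorAlgebra K V) := by
  induction n with
  | zero =>
    intro g hg x
    induction hg using Submodule.span_induction with
    | mem u hu =>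
      obtain ⟨l, hl, rfl⟩ := hu
      rw [List.length_eq_zero_iff.mp (Nat.le_zero.mp hl), mono_nil, hs.2.1]
      exact ⟨x, rfl⟩
    | zero => rw [map_zero]; exact Submodule.zero_mem _
    | add a b _ _ ha hb => rw [map_add]; exact Submodule.add_mem _ ha hb
    | smul c a _ ha => rw [map_smul]; exact Submodule.smul_mem _ _ ha
  | succ n ih =>
    intro g hg x
    induction hg using Submodule.span_induction with
    | mem u hu =>
      obtain ⟨l, hl, rfl⟩ := hu
      rcases l.eq_nil_or_concat with rfl | ⟨l', z, rfl⟩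
      · rw [mono_nil, hs.2.1]; exact ⟨x, rfl⟩
      · have hl' : l'.length ≤ n := by simpa using hl
        rw [List.concat_eq_append, mono_concat, hs.2.2.2.1 x (mono K l') z]
        refine Submodule.sub_mem _ ?_ ?_
        · obtain ⟨w, hw⟩ := ih (mono K l') (mono_mem_F hl') x
          rw [← hw, hs.1]
          exact ⟨m w z, rfl⟩
        · exact ih _ (F_star_ι hs (mono_mem_F hl') z) x
    | zero => rw [map_zero]; exact Submodule.zero_mem _
    | add a b _ _ ha hb => rw [map_add]; exact Submodule.add_mem _ ha hb
    | smul c a _ ha => rw [map_smul]; exact Submodule.smul_mem _ _ ha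

lemma LieMon_star {k : ℕ} {p : T} (hp : LieMon K V k p) (g : T) :
    star p g ∈ LF K k := by
  induction hp generalizing g with
  | base x =>
    obtain ⟨n, hn⟩ := exists_F g
    obtain ⟨w, hw⟩ := V_star_F hs n g hn x
    rw [← hw]
    exact (LieMon.base w).mem_LF (le_refl 1)
  | @brk a b p q hp hq ihp ihq =>
    have e1 : star ⁅p, q⁆ g
        = μ (TensorProduct.map (star p) (star q) (Δ g))
          - μ (TensorProduct.map (star q) (star p) (τ (Δ g))) := by
      rw [Ring.lie_def, map_sub, LinearMap.sub_apply, hs.2.2.2.2, hs.2.2.2.2, cocomm]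
    rw [e1]
    have key : ∀ t : T ⊗[K] T,
        μ (TensorProduct.map (star p) (star q) t)
          - μ (TensorProduct.map (star q) (star p) (τ t)) ∈ LF K (a + b) := by
      intro t
      induction t using TensorProduct.induction_on with
      | zero => simp
      | tmul u v =>
        rw [Algebra.TensorProduct.comm_tmul, TensorProduct.map_tmul, TensorProduct.map_tmul,
          LinearMap.mul'_apply, LinearMap.mul'_apply, ← Ring.lie_def]
        exact LF_brk (ihp u) (ihq v)
      | add t t' h1 h2 =>
        have : μ (TensorProduct.map (star p) (star q) (t + t'))
            - μ (TensorProduct.map (star q) (star p) (τ (t + t')))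
            = (μ (TensorProduct.map (star p) (star q) t)
                - μ (TensorProduct.map (star q) (star p) (τ t)))
              + (μ (TensorProduct.map (star p) (star q) t')
                - μ (TensorProduct.map (star q) (star p) (τ t'))) := by
          simp only [map_add]
          abel
        rw [this]
        exact Submodule.add_mem _ h1 h2
    exact key (Δ g)

lemma LF_star {n : ℕ} {p : T} (hp : p ∈ LF K n) (g : T) : star p g ∈ LF K n := by
  induction hp using Submodule.span_induction with
  | mem u hu =>
    obtain ⟨k, hk, hu⟩ := hu
    exact LF_mono hk (LieMon_star hs hu g)
  | zero => rw [map_zero, LinearMap.zero_apply]; exact Submodule.zero_mem _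
  | add a b _ _ ha hb => rw [map_add, LinearMap.add_apply]; exact Submodule.add_mem _ ha hb
  | smul c a _ ha => rw [map_smul, LinearMap.smul_apply]; exact Submodule.smul_mem _ _ ha

lemma star_mem_lieSpan {f : T} (hf : f ∈ Ls) (g : T) : star f g ∈ Ls := by
  obtain ⟨n, hn⟩ := exists_LF hf
  exact LF_le (LF_star hs hn g)

end S3
/-- the key second-argument product rule property -/
def Mprop (st : TensorAlgebra K V →ₗ[K] TensorAlgebra K V →ₗ[K] TensorAlgebra K V)
    (p : TensorAlgebra K V) : Prop :=
  ∀ f g : TensorAlgebra K V, st f (g * p) = st (st f g) p - st f (st g p)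

section S4
variable {m : V →ₗ[K] V →ₗ[K] V}
  {star : TensorAlgebra K V →ₗ[K] TensorAlgebra K V →ₗ[K] TensorAlgebra K V}
  (hs : IsMagExt m star)

local notation "T" => TensorAlgebra K V
local notation "ιι" => TensorAlgebra.ι K
local notation "Δ" => deshuffle K V
local notation "Ls" => LieSubalgebra.lieSpan K (TensorAlgebra K V)
  (Set.range (TensorAlgebra.ι K : V →ₗ[K] TensorAlgebra K V))

lemma Mprop_zero : Mprop star (0 : T) := by
  intro f g; simp

lemma Mprop_add {a b : T} (ha : Mprop star a) (hb : Mprop star b) : Mprop star (a + b) := by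
  intro f g
  rw [mul_add, map_add, ha f g, hb f g]
  simp only [map_add]
  abel

lemma Mprop_smul (c : K) {a : T} (ha : Mprop star a) : Mprop star (c • a) := by
  intro f g
  rw [mul_smul_comm, map_smul, ha f g]
  simp only [map_smul]
  rw [smul_sub]

include hs

lemma Mprop_ι (y : V) : Mprop star (ιι y) :=
  fun f g => star_prod_ι hs f g y

lemma Mbr {p q : T} (hp : Mprop star p) (hq : Mprop star q)
    (hpq : Mprop star (star p q)) (hqp : Mprop star (star q p))
    (primp : Δ p = p ⊗ₜ[K] 1 + 1 ⊗ₜ[K] p) (primq : Δ q = q ⊗ₜ[K] 1 + 1 ⊗ₜ[K] q) :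
    Mprop star ⁅p, q⁆ := by
  have E3 : ∀ A : T, star A ⁅p, q⁆
      = star (star A p) q - star A (star p q) - star (star A q) p + star A (star q p) := by
    intro A
    rw [Ring.lie_def, map_sub, hq A p, hp A q]
    abel
  intro f g
  have E1 : star f (g * p * q) = star (star (star f g) p) q - star (star f (star g p)) q
      - star (star f (star g q)) p + star f (star (star g q) p)
      - star (star f g) (star p q) + star f (star g (star p q)) := by
    rw [hq f (g * p), hp f g, star_prim_prod hs primq g p, map_sub, LinearMap.sub_apply,
      map_add, hp f (star g q), hpq f g]
    abel
  have E2 : star f (g * q * p) = star (star (star f g) q) p - star (star f (star g q)) p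
      - star (star f (star g p)) q + star f (star (star g p) q)
      - star (star f g) (star q p) + star f (star g (star q p)) := by
    rw [hp f (g * q), hq f g, star_prim_prod hs primp g q, map_sub, LinearMap.sub_apply,
      map_add, hq f (star g p), hqp f g]
    abel
  calc star f (g * ⁅p, q⁆) = star f (g * p * q) - star f (g * q * p) := by
        rw [Ring.lie_def, mul_sub, map_sub, ← mul_assoc, ← mul_assoc]
    _ = star (star f g) ⁅p, q⁆ - star f (star g ⁅p, q⁆) := by
        rw [E1, E2, E3 (star f g), E3 g]
        simp only [map_sub, map_add]
        abel

lemma MLF : ∀ n : ℕ, ∀ p ∈ LF K n, Mprop star p := by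
  intro n
  induction n with
  | zero =>
    intro p hp
    induction hp using Submodule.span_induction with
    | mem u hu =>
      obtain ⟨k, hk, lm⟩ := hu
      cases lm with
      | base x => exact Mprop_ι hs x
      | @brk a b p' q' lmp lmq =>
        exact absurd hk (by have := lmp.pos; have := lmq.pos; omega)
    | zero => exact Mprop_zero
    | add a b _ _ ha hb => exact Mprop_add ha hb
    | smul c a _ ha => exact Mprop_smul c ha
  | succ n ih =>
    intro p hp
    induction hp using Submodule.span_induction with
    | mem u hu =>
      obtain ⟨k, hk, lm⟩ := hu
      cases lm with
      | base x => exact Mprop_ι hs x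
      | @brk a b p' q' lmp lmq =>
        have hale : a ≤ n := by have := lmp.pos; have := lmq.pos; omega
        have hble : b ≤ n := by have := lmp.pos; have := lmq.pos; omega
        refine Mbr hs (ih p' (lmp.mem_LF hale)) (ih q' (lmq.mem_LF hble)) ?_ ?_
          (prim lmp.mem_lieSpan) (prim lmq.mem_lieSpan)
        · exact ih _ (LF_mono hale (LieMon_star hs lmp q'))
        · exact ih _ (LF_mono hble (LieMon_star hs lmq p'))
    | zero => exact Mprop_zero
    | add a b _ _ ha hb => exact Mprop_add ha hb
    | smul c a _ ha => exact Mprop_smul c ha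

lemma Mlem {p : T} (hp : p ∈ Ls) : Mprop star p := by
  obtain ⟨n, hn⟩ := exists_LF hp
  exact MLF hs n p hn

end S4
end PLaux

/-- the free Lie algebra `Lie(V) ⊆ T(V)` (the Lie subalgebra
generated by `V` for the commutator) satisfies `Lie(V)*T(V) ⊆ Lie(V)`, and
`(Lie(V), [−,−], *)` is a post-Lie algebra. -/
theorem lieSpan_post_lie (m : V →ₗ[K] V →ₗ[K] V)
    (star : TensorAlgebra K V →ₗ[K] TensorAlgebra K V →ₗ[K] TensorAlgebra K V)
    (hstar : IsMagExt m star) :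
    (∀ f ∈ LieSubalgebra.lieSpan K (TensorAlgebra K V)
        (Set.range (TensorAlgebra.ι K : V →ₗ[K] TensorAlgebra K V)),
      ∀ g : TensorAlgebra K V,
        star f g ∈ LieSubalgebra.lieSpan K (TensorAlgebra K V)
          (Set.range (TensorAlgebra.ι K : V →ₗ[K] TensorAlgebra K V))) ∧
    (∀ f g h : TensorAlgebra K V,
      f ∈ LieSubalgebra.lieSpan K (TensorAlgebra K V)
          (Set.range (TensorAlgebra.ι K : V →ₗ[K] TensorAlgebra K V)) →
      g ∈ LieSubalgebra.lieSpan K (TensorAlgebra K V)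
          (Set.range (TensorAlgebra.ι K : V →ₗ[K] TensorAlgebra K V)) →
      h ∈ LieSubalgebra.lieSpan K (TensorAlgebra K V)
          (Set.range (TensorAlgebra.ι K : V →ₗ[K] TensorAlgebra K V)) →
        star f ⁅g, h⁆
            = star (star f g) h - star f (star g h) - star (star f h) g + star f (star h g) ∧
        star ⁅f, g⁆ h = ⁅star f h, g⁆ + ⁅f, star g h⁆) := by
  constructor
  · intro f hf g
    exact PLaux.star_mem_lieSpan hstar hf g
  · intro f g h hf hg hh
    constructor
    · have Mh := PLaux.Mlem hstar hh
      have Mg := PLaux.Mlem hstar hg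
      rw [Ring.lie_def, map_sub, Mh f g, Mg f h]
      abel
    · have hprim := PLaux.prim hh
      simp only [Ring.lie_def]
      rw [map_sub, LinearMap.sub_apply, PLaux.star_prim_prod hstar hprim f g,
        PLaux.star_prim_prod hstar hprim g f]
      abel


end
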